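/- Let Ω have finite measure, p ∈ (0,1), ε_k ↓ 0, and let (u_k), (v_k) ⊂ L²(Ω) satisfy: u_k → ū and v_k → ū a.e. with a common L² dominating function, ∫_Ω ψ'_{ε_k}(u_k²)·u_k² dx → (p/2)∫_Ω |ū|^p dx, and ∫_Ω ψ'_{ε_k}(u_k²)(v_k − u_k)² dx → 0. Then 2∫_Ω ψ'_{ε_k}(u_k²)·v_k² dx → p∫_Ω |ū|^p dx. -/

import Mathlib

open Set MeasureTheory Filter Topology

noncomputable def psiSmDeriv (p ε t : ℝ) : ℝ :=
  if t = 0 then (p / 2) * ε ^ (p - 2) else (p / 2) * min (ε ^ (p - 2)) (t ^ ((p - 2) / 2))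

theorem stmt17 (d : ℕ) (Ω : Set (Fin d → ℝ)) (hΩ : MeasurableSet Ω)
    (hfin : volume Ω < ⊤) (p : ℝ) (hp : 0 < p) (hp1 : p < 1)
    (ε : ℕ → ℝ) (hεpos : ∀ k, 0 < ε k) (hεanti : Antitone ε)
    (hεlim : Tendsto ε atTop (nhds 0))
    (u v : ℕ → (Fin d → ℝ) → ℝ) (ubar w : (Fin d → ℝ) → ℝ)
    (hmemu : ∀ k, MemLp (u k) 2 (volume.restrict Ω))
    (hmemv : ∀ k, MemLp (v k) 2 (volume.restrict Ω))
    (haeu : ∀ᵐ x ∂(volume.restrict Ω), Tendsto (fun k => u k x) atTop (nhds (ubar x)))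
    (haev : ∀ᵐ x ∂(volume.restrict Ω), Tendsto (fun k => v k x) atTop (nhds (ubar x)))
    (hdomu : ∀ k, ∀ᵐ x ∂(volume.restrict Ω), |u k x| ≤ w x)
    (hdomv : ∀ k, ∀ᵐ x ∂(volume.restrict Ω), |v k x| ≤ w x)
    (hw : MemLp w 2 (volume.restrict Ω))
    (h1 : Tendsto (fun k => ∫ x in Ω, psiSmDeriv p (ε k) ((u k x) ^ 2) * (u k x) ^ 2)
      atTop (nhds ((p / 2) * ∫ x in Ω, |ubar x| ^ p)))
    (h2 : Tendsto (fun k => ∫ x in Ω, psiSmDeriv p (ε k) ((u k x) ^ 2) * (v k x - u k x) ^ 2)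
      atTop (nhds 0)) :
    Tendsto (fun k => 2 * ∫ x in Ω, psiSmDeriv p (ε k) ((u k x) ^ 2) * (v k x) ^ 2)
      atTop (nhds (p * ∫ x in Ω, |ubar x| ^ p)) := by
  set μ := volume.restrict Ω with hμdef
  -- pointwise nonnegativity of the weight
  have hψnonneg : ∀ k x, 0 ≤ psiSmDeriv p (ε k) ((u k x) ^ 2) := by
    intro k x
    have ha : (0:ℝ) ≤ (ε k) ^ (p-2) := Real.rpow_nonneg (hεpos k).le _
    have hb : (0:ℝ) ≤ ((u k x)^2 : ℝ) ^ ((p-2)/2) := Real.rpow_nonneg (sq_nonneg _) _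
    unfold psiSmDeriv
    split_ifs
    · positivity
    · exact mul_nonneg (by positivity) (le_min ha hb)
  -- pointwise bound
  have hψbd : ∀ k x, ‖psiSmDeriv p (ε k) ((u k x) ^ 2)‖ ≤ (p/2) * (ε k) ^ (p-2) := by
    intro k x
    rw [Real.norm_eq_abs, abs_of_nonneg (hψnonneg k x)]
    unfold psiSmDeriv
    split_ifs
    · exact le_refl _
    · exact mul_le_mul_of_nonneg_left (min_le_left _ _) (by positivity)
  -- measurability
  have hψmeas : ∀ k, AEStronglyMeasurable (fun x => psiSmDeriv p (ε k) ((u k x) ^ 2)) μ := by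
    intro k
    have hg : Measurable (fun t : ℝ => psiSmDeriv p (ε k) t) := by
      unfold psiSmDeriv
      exact Measurable.ite (measurableSet_eq) measurable_const
        ((measurable_const.min (measurable_id.pow_const ((p-2)/2))).const_mul _)
    have hu2 : AEMeasurable (fun x => (u k x)^2) μ :=
      ((hmemu k).aestronglyMeasurable.aemeasurable).pow_const 2
    exact (hg.comp_aemeasurable hu2).aestronglyMeasurable
  -- integrability of products of two L² functions
  have hmul : ∀ (f g : (Fin d → ℝ) → ℝ), MemLp f 2 μ → MemLp g 2 μ →
      Integrable (fun x => f x * g x) μ := by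
    intro f g hf hg
    refine Integrable.mono' ((hf.integrable_sq.add hg.integrable_sq).div_const 2)
      (hf.aestronglyMeasurable.mul hg.aestronglyMeasurable)
      (Eventually.of_forall fun x => ?_)
    simp only [Pi.add_apply]
    rw [Real.norm_eq_abs]
    exact abs_le.mpr ⟨by nlinarith [sq_nonneg (f x + g x)], by nlinarith [sq_nonneg (f x - g x)]⟩
  -- integrability of ψ * (integrable)
  have hInt : ∀ k (f : (Fin d → ℝ) → ℝ), Integrable f μ →
      Integrable (fun x => psiSmDeriv p (ε k) ((u k x) ^ 2) * f x) μ := by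
    intro k f hf
    exact hf.bdd_mul (hψmeas k) (Eventually.of_forall (hψbd k))
  have hdmem : ∀ k, MemLp (fun x => v k x - u k x) 2 μ := fun k => (hmemv k).sub (hmemu k)
  have hIu2 : ∀ k, Integrable (fun x => psiSmDeriv p (ε k) ((u k x) ^ 2) * (u k x)^2) μ :=
    fun k => hInt k _ (hmemu k).integrable_sq
  have hId2 : ∀ k, Integrable (fun x => psiSmDeriv p (ε k) ((u k x) ^ 2) * (v k x - u k x)^2) μ :=
    fun k => hInt k _ (hdmem k).integrable_sq
  have hIud : ∀ k, Integrable
      (fun x => psiSmDeriv p (ε k) ((u k x) ^ 2) * (u k x * (v k x - u k x))) μ :=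
    fun k => hInt k _ (hmul _ _ (hmemu k) (hdmem k))
  -- abbreviations
  set A : ℕ → ℝ := fun k => ∫ x in Ω, psiSmDeriv p (ε k) ((u k x) ^ 2) * (u k x) ^ 2 with hA
  set B : ℕ → ℝ := fun k => ∫ x in Ω, psiSmDeriv p (ε k) ((u k x) ^ 2) * (v k x - u k x) ^ 2 with hB
  set C : ℕ → ℝ := fun k =>
    ∫ x in Ω, psiSmDeriv p (ε k) ((u k x) ^ 2) * (u k x * (v k x - u k x)) with hC
  -- splitting identity
  have hsplit : ∀ k, (∫ x in Ω, psiSmDeriv p (ε k) ((u k x) ^ 2) * (v k x) ^ 2)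
      = A k + 2 * C k + B k := by
    intro k
    have heq : (fun x => psiSmDeriv p (ε k) ((u k x) ^ 2) * (v k x) ^ 2)
        = fun x => (psiSmDeriv p (ε k) ((u k x) ^ 2) * (u k x) ^ 2
            + 2 * (psiSmDeriv p (ε k) ((u k x) ^ 2) * (u k x * (v k x - u k x))))
          + psiSmDeriv p (ε k) ((u k x) ^ 2) * (v k x - u k x) ^ 2 := by
      funext x; ring
    have hi1 : Integrable (fun x => psiSmDeriv p (ε k) ((u k x) ^ 2) * (u k x) ^ 2
        + 2 * (psiSmDeriv p (ε k) ((u k x) ^ 2) * (u k x * (v k x - u k x)))) μ :=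
      (hIu2 k).add ((hIud k).const_mul 2)
    rw [show (∫ x in Ω, psiSmDeriv p (ε k) ((u k x) ^ 2) * (v k x) ^ 2)
        = ∫ x, (fun x => psiSmDeriv p (ε k) ((u k x) ^ 2) * (v k x) ^ 2) x ∂μ from rfl, heq,
      integral_add hi1 (hId2 k),
      integral_add (hIu2 k) ((hIud k).const_mul 2), integral_const_mul _ _]
  -- Cauchy–Schwarz via nonnegative quadratic
  have hCS : ∀ k, (C k)^2 ≤ A k * B k := by
    intro k
    have key : ∀ lam : ℝ, 0 ≤ B k * (lam * lam) + (2 * C k) * lam + A k := by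
      intro lam
      have heq : (fun x => psiSmDeriv p (ε k) ((u k x) ^ 2)
            * (lam * (v k x - u k x) + u k x) ^ 2)
          = fun x => ((lam ^ 2) * (psiSmDeriv p (ε k) ((u k x) ^ 2) * (v k x - u k x) ^ 2)
              + (2 * lam) * (psiSmDeriv p (ε k) ((u k x) ^ 2) * (u k x * (v k x - u k x))))
            + psiSmDeriv p (ε k) ((u k x) ^ 2) * (u k x) ^ 2 := by
        funext x; ring
      have hval : (∫ x in Ω, psiSmDeriv p (ε k) ((u k x) ^ 2)
            * (lam * (v k x - u k x) + u k x) ^ 2)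
          = B k * (lam * lam) + (2 * C k) * lam + A k := by
        have hi1 : Integrable (fun x =>
            (lam ^ 2) * (psiSmDeriv p (ε k) ((u k x) ^ 2) * (v k x - u k x) ^ 2)
            + (2 * lam) * (psiSmDeriv p (ε k) ((u k x) ^ 2) * (u k x * (v k x - u k x)))) μ :=
          ((hId2 k).const_mul _).add ((hIud k).const_mul _)
        rw [show (∫ x in Ω, psiSmDeriv p (ε k) ((u k x) ^ 2)
              * (lam * (v k x - u k x) + u k x) ^ 2)
            = ∫ x, (fun x => psiSmDeriv p (ε k) ((u k x) ^ 2)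
              * (lam * (v k x - u k x) + u k x) ^ 2) x ∂μ from rfl, heq,
          integral_add hi1 (hIu2 k),
          integral_add ((hId2 k).const_mul _) ((hIud k).const_mul _),
          integral_const_mul _ _, integral_const_mul _ _]
        ring
      rw [← hval]
      exact integral_nonneg fun x => mul_nonneg (hψnonneg k x) (sq_nonneg _)
    have hd := discrim_le_zero key
    rw [discrim] at hd
    nlinarith
  have hAnn : ∀ k, 0 ≤ A k :=
    fun k => integral_nonneg fun x => mul_nonneg (hψnonneg k x) (sq_nonneg _)
  have hBnn : ∀ k, 0 ≤ B k :=
    fun k => integral_nonneg fun x => mul_nonneg (hψnonneg k x) (sq_nonneg _)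
  -- cross term tends to 0
  have hC0 : Tendsto C atTop (nhds 0) := by
    have hbound : ∀ k, ‖C k‖ ≤ Real.sqrt (A k) * Real.sqrt (B k) := by
      intro k
      rw [Real.norm_eq_abs, ← Real.sqrt_sq_eq_abs, ← Real.sqrt_mul (hAnn k)]
      exact Real.sqrt_le_sqrt (hCS k)
    have hsq : Tendsto (fun k => Real.sqrt (A k) * Real.sqrt (B k)) atTop (nhds 0) := by
      have hAsq : Tendsto (fun k => Real.sqrt (A k)) atTop
          (nhds (Real.sqrt ((p / 2) * ∫ x in Ω, |ubar x| ^ p))) :=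
        (Real.continuous_sqrt.tendsto _).comp h1
      have hBsq : Tendsto (fun k => Real.sqrt (B k)) atTop (nhds (Real.sqrt 0)) :=
        (Real.continuous_sqrt.tendsto _).comp h2
      have := hAsq.mul hBsq
      simpa using this
    exact squeeze_zero_norm hbound hsq
  -- conclude
  have hfinal : Tendsto (fun k => 2 * (A k + 2 * C k + B k)) atTop
      (nhds (p * ∫ x in Ω, |ubar x| ^ p)) := by
    have := ((h1.add (hC0.const_mul 2)).add h2).const_mul 2
    convert this using 2
    ring
  refine hfinal.congr fun k => ?_
  rw [hsplit k]
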